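/- arXiv:0906.1125 — 2 statements merged into one kernel-verified Lean document; each statement's English description precedes it below -/
import Mathlib

section
/- Let k be a division ring that is not commutative (not a field). Then there exists no additive closed symmetric monoidal structure on the category of left k-modules: there is no monoidal category structure on ModuleCat k that is simultaneously symmetric, monoidal closed, and additive in each variable. -/
open CategoryTheory MonoidalCategory

universe u

/-- An additive closed symmetric monoidal structure on the category of left `R`-modules:
a monoidal structure which is symmetric, closed, and additive (preadditive) in each variable. -/
structure AddClosedSymmMonStruct (R : Type u) [Ring R] : Type (u + 1) where
  mon : MonoidalCategory (ModuleCat.{u} R)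
  symm : @SymmetricCategory (ModuleCat.{u} R) _ mon
  closed : @MonoidalClosed (ModuleCat.{u} R) _ mon
  preadd : @MonoidalPreadditive (ModuleCat.{u} R) _ _ mon

/-- The unit object of the structure. -/
def AddClosedSymmMonStruct.unit {R : Type u} [Ring R] (s : AddClosedSymmMonStruct R) :
    ModuleCat.{u} R :=
  letI := s.mon; 𝟙_ (ModuleCat.{u} R)

/-- The monoidal product (the "wedge") of the structure. -/
def AddClosedSymmMonStruct.wedge {R : Type u} [Ring R] (s : AddClosedSymmMonStruct R)
    (A B : ModuleCat.{u} R) : ModuleCat.{u} R :=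
  letI := s.mon; A ⊗ B


theorem end_unit_comm {C : Type*} [Category C] [MonoidalCategory C]
    (f g : 𝟙_ C ⟶ 𝟙_ C) : f ≫ g = g ≫ f := by
  have key : (λ_ (𝟙_ C)).inv ≫ (f ⊗ₘ g) ≫ (λ_ (𝟙_ C)).hom = f ≫ g := by
    rw [MonoidalCategory.tensorHom_def]
    calc (λ_ (𝟙_ C)).inv ≫ (f ▷ 𝟙_ C ≫ 𝟙_ C ◁ g) ≫ (λ_ (𝟙_ C)).hom
        = (λ_ (𝟙_ C)).inv ≫ f ▷ 𝟙_ C ≫ (λ_ (𝟙_ C)).hom ≫ g := by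
          simp [leftUnitor_naturality]
      _ = (ρ_ (𝟙_ C)).inv ≫ f ▷ 𝟙_ C ≫ (ρ_ (𝟙_ C)).hom ≫ g := by
          rw [unitors_equal, unitors_inv_equal]
      _ = f ≫ g := by simp [rightUnitor_naturality_assoc]
  have key' : (λ_ (𝟙_ C)).inv ≫ (f ⊗ₘ g) ≫ (λ_ (𝟙_ C)).hom = g ≫ f := by
    rw [MonoidalCategory.tensorHom_def']
    calc (λ_ (𝟙_ C)).inv ≫ (𝟙_ C ◁ g ≫ f ▷ 𝟙_ C) ≫ (λ_ (𝟙_ C)).hom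
        = (λ_ (𝟙_ C)).inv ≫ 𝟙_ C ◁ g ≫ f ▷ 𝟙_ C ≫ (ρ_ (𝟙_ C)).hom := by
          rw [unitors_equal]; simp
      _ = (λ_ (𝟙_ C)).inv ≫ 𝟙_ C ◁ g ≫ (λ_ (𝟙_ C)).hom ≫ f := by
          rw [rightUnitor_naturality, unitors_equal]
      _ = g ≫ f := by simp [leftUnitor_naturality_assoc]
  rw [← key, key']

theorem no_aux (k : Type u) [DivisionRing k] (h : ¬ ∀ a b : k, a * b = b * a)
    (mon : MonoidalCategory (ModuleCat.{u} k))
    (preadd : MonoidalPreadditive (ModuleCat.{u} k)) : False := by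
  -- commutativity of linear endomorphisms of the unit module
  set K : ModuleCat.{u} k := 𝟙_ (ModuleCat.{u} k) with hK
  have comm : ∀ f g : (K : Type u) →ₗ[k] (K : Type u), g.comp f = f.comp g :=
    fun f g => congrArg ModuleCat.Hom.hom
      (end_unit_comm (C := ModuleCat.{u} k) (ModuleCat.ofHom f : K ⟶ K) (ModuleCat.ofHom g : K ⟶ K))
  by_cases hns : Nontrivial K
  · -- K nontrivial: build noncommuting endomorphisms unless k is commutative
    let b := Module.Basis.ofVectorSpace k (K : Type u)
    obtain ⟨i⟩ := b.index_nonempty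
    classical
    by_cases hone : ∀ t, t = i
    · -- one-dimensional: k must be commutative
      apply h
      intro a c
      have key := comm (b.constr ℕ fun _ => a • b i) (b.constr ℕ fun _ => c • b i)
      have := congrArg (fun φ => φ (b i)) key
      simp only [LinearMap.comp_apply, Module.Basis.constr_basis, map_smul] at this
      -- this : c • a • b i = a • c • b i
      rw [← mul_smul, ← mul_smul] at this
      exact smul_left_injective k (b.ne_zero i) this
    · -- at least two basis vectors: contradiction
      push_neg at hone
      obtain ⟨j, hj⟩ := hone
      have key := comm (b.constr ℕ fun t => if t = i then b i else 0)
        (b.constr ℕ fun t => if t = i then b j else 0)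
      have h2 := congrArg (fun φ => φ (b i)) key
      simp only [LinearMap.comp_apply, Module.Basis.constr_basis, if_pos, map_zero, hj,
        if_neg, if_true, if_false] at h2
      exact b.ne_zero j h2
  · -- K trivial: then the identity of k is zero, contradiction
    have hsub : Subsingleton (K : Type u) := not_nontrivial_iff_subsingleton.mp hns
    have hid : 𝟙 K = (0 : K ⟶ K) := by
      apply ModuleCat.hom_ext; apply LinearMap.ext; intro x; exact Subsingleton.elim _ _
    have hz : 𝟙 (ModuleCat.of k k ⊗ K) = (0 : ModuleCat.of k k ⊗ K ⟶ ModuleCat.of k k ⊗ K) := by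
      rw [← id_tensorHom_id, hid, MonoidalPreadditive.tensor_zero]
    have : 𝟙 (ModuleCat.of k k) = (ρ_ (ModuleCat.of k k)).inv ≫ 𝟙 (ModuleCat.of k k ⊗ K) ≫ (ρ_ (ModuleCat.of k k)).hom := by rw [Category.id_comp, Iso.inv_hom_id]
    rw [hz] at this
    simp only [Limits.zero_comp, Limits.comp_zero] at this
    have h3 : (LinearMap.id : k →ₗ[k] k) = 0 := congrArg ModuleCat.Hom.hom this
    have h2 := DFunLike.congr_fun h3 (1 : k)
    simp at h2


/-- If `k` is a division ring which is not commutative (not a field), then there is no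
additive closed symmetric monoidal structure on the category of left `k`-modules. -/
theorem no_structure_of_noncommutative_divisionRing (k : Type u) [DivisionRing k]
    (h : ¬ ∀ a b : k, a * b = b * a) : IsEmpty (AddClosedSymmMonStruct k) :=
  ⟨fun s => no_aux k h s.mon (letI := s.mon; s.preadd)⟩
end

section
/- Let R be a ring with an additive closed symmetric monoidal structure ∧ on the category of left R-modules. For any morphism g : A → B of left R-modules, consider the morphism 𝟙_R ∧ g : R ∧ A → R ∧ B. Then: (i) 𝟙_R ∧ g = 0 if and only if g = 0; (ii) 𝟙_R ∧ g is an isomorphism if and only if g is an isomorphism; (iii) 𝟙_R ∧ g is an epimorphism (equivalently, surjective) if and only if g is. In particular, the functor R ∧ − on ModuleCat R is faithful and conservative. -/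
open CategoryTheory MonoidalCategory
open CategoryTheory.Limits

universe u

/-- The left whiskering `𝟙_R ∧ g : R ∧ A ⟶ R ∧ B` of a morphism `g : A ⟶ B`. -/
def AddClosedSymmMonStruct.whiskL {R : Type u} [Ring R] (s : AddClosedSymmMonStruct R)
    (A : ModuleCat.{u} R) {B C : ModuleCat.{u} R} (g : B ⟶ C) : s.wedge A B ⟶ s.wedge A C :=
  letI := s.mon; A ◁ g

/-- The functor `R ∧ -` on `ModuleCat R`. -/
def AddClosedSymmMonStruct.tensorLeftR {R : Type u} [Ring R] (s : AddClosedSymmMonStruct R) :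
    ModuleCat.{u} R ⥤ ModuleCat.{u} R :=
  letI := s.mon; tensorLeft (ModuleCat.of R R)

set_option linter.unusedSectionVars false

section Free

variable {R : Type u} [Ring R]

/-- The cofan exhibiting `κ →₀ R` as a coproduct of copies of `R`. -/
noncomputable def freeCofan (κ : Type u) :
    Cofan (fun _ : κ => (ModuleCat.of R R : ModuleCat.{u} R)) :=
  Cofan.mk (ModuleCat.of R (κ →₀ R)) (fun k => ModuleCat.ofHom (Finsupp.lsingle k))

noncomputable def freeCofanIsColimit (κ : Type u) : IsColimit (freeCofan (R := R) κ) := by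
  refine mkCofanColimit _
    (fun t => ModuleCat.ofHom (Finsupp.lsum ℕ (fun k => (t.inj k).hom)))
    (fun t k => ?_) (fun t m hm => ?_)
  · apply ModuleCat.hom_ext
    apply LinearMap.ext_ring
    show (Finsupp.lsum ℕ (fun k => (t.inj k).hom)) (Finsupp.single k (1 : R)) =
      (t.inj k).hom (1 : R)
    rw [Finsupp.lsum_single]
  · apply ModuleCat.hom_ext
    refine Finsupp.lhom_ext' fun k => ?_
    exact (congrArg ModuleCat.Hom.hom (hm k)).trans
      (Finsupp.lsum_comp_lsingle (S := ℕ) (fun k => (t.inj k).hom) k).symm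

end Free

section Aux

variable {R : Type u} [Ring R]
  [MonoidalCategory (ModuleCat.{u} R)]
  [SymmetricCategory (ModuleCat.{u} R)]
  [MonoidalClosed (ModuleCat.{u} R)]
  [MonoidalPreadditive (ModuleCat.{u} R)]

theorem aux_zero {A B : ModuleCat.{u} R} (g : A ⟶ B)
    (h : (ModuleCat.of R R) ◁ g = 0) : g = 0 := by
  classical
  haveI : PreservesColimitsOfSize.{u, u} (tensorLeft A) :=
    (ihom.adjunction A).leftAdjoint_preservesColimits
  have hcA : IsColimit ((tensorLeft A).mapCocone
      (freeCofan (R := R) (↑(𝟙_ (ModuleCat.{u} R)) : Type u))) :=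
    isColimitOfPreserves _ (freeCofanIsColimit _)
  -- F ◁ g = 0
  have hF : (ModuleCat.of R ((↑(𝟙_ (ModuleCat.{u} R)) : Type u) →₀ R)) ◁ g = 0 := by
    have h1 : (β_ A (ModuleCat.of R ((↑(𝟙_ (ModuleCat.{u} R)) : Type u) →₀ R))).hom ≫
        ((ModuleCat.of R ((↑(𝟙_ (ModuleCat.{u} R)) : Type u) →₀ R)) ◁ g) = 0 := by
      apply hcA.hom_ext
      rintro ⟨k⟩
      let ι : (ModuleCat.of R R : ModuleCat.{u} R) ⟶
          ModuleCat.of R ((↑(𝟙_ (ModuleCat.{u} R)) : Type u) →₀ R) :=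
        ModuleCat.ofHom (Finsupp.lsingle k)
      show A ◁ ι ≫ (β_ A (ModuleCat.of R ((↑(𝟙_ (ModuleCat.{u} R)) : Type u) →₀ R))).hom ≫
          ((ModuleCat.of R ((↑(𝟙_ (ModuleCat.{u} R)) : Type u) →₀ R)) ◁ g) = _ ≫ 0
      rw [comp_zero, ← Category.assoc, BraidedCategory.braiding_naturality_right,
        Category.assoc, ← whisker_exchange, h, zero_comp, comp_zero]
    calc (ModuleCat.of R ((↑(𝟙_ (ModuleCat.{u} R)) : Type u) →₀ R)) ◁ g
        = (β_ A (ModuleCat.of R ((↑(𝟙_ (ModuleCat.{u} R)) : Type u) →₀ R))).inv ≫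
          ((β_ A (ModuleCat.of R ((↑(𝟙_ (ModuleCat.{u} R)) : Type u) →₀ R))).hom ≫
          ((ModuleCat.of R ((↑(𝟙_ (ModuleCat.{u} R)) : Type u) →₀ R)) ◁ g)) := by
          rw [← Category.assoc, Iso.inv_hom_id, Category.id_comp]
      _ = 0 := by rw [h1, comp_zero]
  -- K ◁ g = 0
  have hK : (𝟙_ (ModuleCat.{u} R)) ◁ g = 0 := by
    let p : ModuleCat.of R ((↑(𝟙_ (ModuleCat.{u} R)) : Type u) →₀ R) ⟶ 𝟙_ (ModuleCat.{u} R) :=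
      ModuleCat.ofHom (Finsupp.linearCombination R
        (_root_.id : (↑(𝟙_ (ModuleCat.{u} R)) : Type u) → ↑(𝟙_ (ModuleCat.{u} R))))
    haveI hp : Epi p := (ModuleCat.epi_iff_surjective p).2
      (Finsupp.linearCombination_id_surjective R (↑(𝟙_ (ModuleCat.{u} R)) : Type u))
    haveI : (tensorLeft A).IsLeftAdjoint := (ihom.adjunction A).isLeftAdjoint
    haveI : Epi ((tensorLeft A).map p) := inferInstance
    haveI hAp : Epi (A ◁ p) := by exact this
    have h2 : (A ◁ p) ≫ ((β_ A (𝟙_ (ModuleCat.{u} R))).hom ≫ ((𝟙_ (ModuleCat.{u} R)) ◁ g)) =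
        (A ◁ p) ≫ 0 := by
      rw [comp_zero, ← Category.assoc, BraidedCategory.braiding_naturality_right,
        Category.assoc, ← whisker_exchange, hF, zero_comp, comp_zero]
    have h3 : (β_ A (𝟙_ (ModuleCat.{u} R))).hom ≫ ((𝟙_ (ModuleCat.{u} R)) ◁ g) = 0 :=
      (cancel_epi (A ◁ p)).1 h2
    calc (𝟙_ (ModuleCat.{u} R)) ◁ g
        = (β_ A (𝟙_ (ModuleCat.{u} R))).inv ≫ ((β_ A (𝟙_ (ModuleCat.{u} R))).hom ≫
            ((𝟙_ (ModuleCat.{u} R)) ◁ g)) := by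
          rw [← Category.assoc, Iso.inv_hom_id, Category.id_comp]
      _ = 0 := by rw [h3, comp_zero]
  calc g = (λ_ A).inv ≫ ((𝟙_ (ModuleCat.{u} R)) ◁ g ≫ (λ_ B).hom) := by
        rw [MonoidalCategory.leftUnitor_naturality, ← Category.assoc, Iso.inv_hom_id,
          Category.id_comp]
    _ = 0 := by rw [hK, zero_comp, comp_zero]

theorem aux_zero_iff {A B : ModuleCat.{u} R} (g : A ⟶ B) :
    (ModuleCat.of R R) ◁ g = 0 ↔ g = 0 := by
  refine ⟨aux_zero g, fun hg => ?_⟩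
  rw [hg, MonoidalPreadditive.whiskerLeft_zero]

theorem aux_surj {A B : ModuleCat.{u} R} (g : A ⟶ B)
    (h : Epi ((ModuleCat.of R R) ◁ g)) : Function.Surjective g := by
  let c : B ⟶ ModuleCat.of R (B ⧸ LinearMap.range g.hom) :=
    ModuleCat.ofHom (Submodule.mkQ (LinearMap.range g.hom))
  have hgc : g ≫ c = 0 := by
    apply ModuleCat.hom_ext; apply LinearMap.ext; intro a
    show Submodule.mkQ (LinearMap.range g.hom) (g a) = 0
    rw [Submodule.mkQ_apply, Submodule.Quotient.mk_eq_zero]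
    exact ⟨a, rfl⟩
  have h1 : (ModuleCat.of R R) ◁ g ≫ (ModuleCat.of R R) ◁ c = (ModuleCat.of R R) ◁ g ≫ 0 := by
    rw [comp_zero, ← MonoidalCategory.whiskerLeft_comp, hgc,
      MonoidalPreadditive.whiskerLeft_zero]
  have h2 : (ModuleCat.of R R) ◁ c = 0 := (cancel_epi _).1 h1
  have hc : c = 0 := aux_zero c h2
  intro b
  have hb : Submodule.mkQ (LinearMap.range g.hom) b = 0 :=
    LinearMap.congr_fun (congrArg ModuleCat.Hom.hom hc) b
  rw [Submodule.mkQ_apply, Submodule.Quotient.mk_eq_zero] at hb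
  obtain ⟨a, ha⟩ := hb
  exact ⟨a, ha⟩

theorem aux_epi_iff {A B : ModuleCat.{u} R} (g : A ⟶ B) :
    Epi ((ModuleCat.of R R) ◁ g) ↔ Epi g := by
  constructor
  · intro h
    exact (ModuleCat.epi_iff_surjective g).2 (aux_surj g h)
  · intro h
    haveI : (tensorLeft (ModuleCat.of R R)).IsLeftAdjoint :=
      (ihom.adjunction _).isLeftAdjoint
    have := (tensorLeft (ModuleCat.of R R)).map_epi g
    exact this

theorem aux_inj {A B : ModuleCat.{u} R} (g : A ⟶ B)
    (h : Mono ((ModuleCat.of R R) ◁ g)) : Function.Injective g := by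
  intro a a' haa
  have key : ∀ a₀ : A, g a₀ = 0 → a₀ = 0 := by
    intro a₀ ha₀
    let φ : ModuleCat.of R R ⟶ A := ModuleCat.ofHom (LinearMap.toSpanSingleton R A a₀)
    have hφg : φ ≫ g = 0 := by
      apply ModuleCat.hom_ext; apply LinearMap.ext; intro r
      show g (LinearMap.toSpanSingleton R A a₀ r) = 0
      rw [LinearMap.toSpanSingleton_apply, map_smul, ha₀, smul_zero]
    have h1 : (ModuleCat.of R R) ◁ φ ≫ (ModuleCat.of R R) ◁ g =
        0 ≫ (ModuleCat.of R R) ◁ g := by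
      rw [zero_comp, ← MonoidalCategory.whiskerLeft_comp, hφg,
        MonoidalPreadditive.whiskerLeft_zero]
    have h2 : (ModuleCat.of R R) ◁ φ = 0 := (cancel_mono _).1 h1
    have hφ : φ = 0 := aux_zero φ h2
    have h3 : (1 : R) • a₀ = (0 : A) :=
      LinearMap.congr_fun (congrArg ModuleCat.Hom.hom hφ) (1 : R)
    rwa [one_smul] at h3
  have : g (a - a') = 0 := by rw [map_sub, haa, sub_self]
  exact sub_eq_zero.1 (key _ this)

theorem aux_iso_iff {A B : ModuleCat.{u} R} (g : A ⟶ B) :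
    IsIso ((ModuleCat.of R R) ◁ g) ↔ IsIso g := by
  constructor
  · intro h
    haveI : Mono ((ModuleCat.of R R) ◁ g) := inferInstance
    haveI : Epi ((ModuleCat.of R R) ◁ g) := inferInstance
    haveI : Mono g := (ModuleCat.mono_iff_injective g).2 (aux_inj g ‹_›)
    haveI : Epi g := (aux_epi_iff g).1 ‹_›
    exact isIso_of_mono_of_epi g
  · intro h
    have : IsIso ((tensorLeft (ModuleCat.of R R)).map g) := inferInstance
    exact this

end Aux


/-- For any additive closed symmetric monoidal structure `∧` on left `R`-modules and any
morphism `g : A ⟶ B`, the morphism `𝟙_R ∧ g : R ∧ A ⟶ R ∧ B` is zero (resp. an isomorphism,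
resp. an epimorphism, equivalently surjective) if and only if `g` is.  In particular the
functor `R ∧ -` is faithful and conservative. -/
theorem whiskerLeft_reflects (R : Type u) [Ring R] (s : AddClosedSymmMonStruct R) :
    (∀ (A B : ModuleCat.{u} R) (g : A ⟶ B),
        (s.whiskL (ModuleCat.of R R) g = 0 ↔ g = 0) ∧
        (IsIso (s.whiskL (ModuleCat.of R R) g) ↔ IsIso g) ∧
        (Epi (s.whiskL (ModuleCat.of R R) g) ↔ Epi g) ∧
        (Function.Surjective (s.whiskL (ModuleCat.of R R) g) ↔ Function.Surjective g)) ∧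
      s.tensorLeftR.Faithful ∧ s.tensorLeftR.ReflectsIsomorphisms := by
  letI := s.mon
  haveI := s.symm
  haveI := s.closed
  haveI := s.preadd
  have hmap : ∀ {A B : ModuleCat.{u} R} (f : A ⟶ B),
      s.tensorLeftR.map f = (ModuleCat.of R R) ◁ f := fun _ => rfl
  refine ⟨fun A B g => ?_, ?_, ?_⟩
  · have hw : s.whiskL (ModuleCat.of R R) g = (ModuleCat.of R R) ◁ g := rfl
    refine ⟨?_, ?_, ?_, ?_⟩
    · rw [hw]; exact aux_zero_iff g
    · rw [hw]; exact aux_iso_iff g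
    · rw [hw]; exact aux_epi_iff g
    · rw [hw]
      exact ((ModuleCat.epi_iff_surjective _).symm.trans (aux_epi_iff g)).trans
        (ModuleCat.epi_iff_surjective g)
  · refine ⟨fun {A B f f'} hff => ?_⟩
    have h2 : (ModuleCat.of R R) ◁ (f - f') = 0 := by
      have h1 : (tensorLeft (ModuleCat.of R R)).map (f - f') = 0 := by
        rw [Functor.map_sub]
        have hf : (tensorLeft (ModuleCat.of R R)).map f = (tensorLeft _).map f' := hff
        rw [hf, sub_self]
      exact h1
    have h3 : f - f' = 0 := aux_zero _ h2
    exact sub_eq_zero.1 h3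
  · refine ⟨fun {A B} f hf => ?_⟩
    apply (aux_iso_iff f).1
    rwa [← hmap f]
end
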